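/- Local non-bossiness and stability are independent properties of school choice mechanisms: there exists a stable mechanism that is not locally non-bossy (and not strategy-proof), obtained by overriding student-optimal DA with school-optimal DA at a single preference profile. -/

import Mathlib

/-- A preference profile: each student has a (strict) preference relation over
`Option S`, where `none` is the outside option `s₀` and `some s` is school `s`. -/
abbrev Profile (N S : Type*) := N → Option S → Option S → Prop

/-- A school choice context: strict priorities and capacities for each school. -/
structure SchoolContext (N S : Type*) where
  prio : S → N → N → Prop
  prio_sto : ∀ s, IsStrictTotalOrder N (prio s)
  cap : S → ℕ
  cap_pos : ∀ s, 1 ≤ cap s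

/-- Well-formedness of a profile: each student's preference is a strict linear order. -/
def ProfWF {N S : Type*} (P : Profile N S) : Prop :=
  ∀ i, IsStrictTotalOrder (Option S) (P i)

/-- Feasibility of an assignment: capacities are respected. -/
def Feasible {N S : Type*} (C : SchoolContext N S) (μ : N → Option S) : Prop :=
  ∀ s : S, {i | μ i = some s}.ncard ≤ C.cap s

/-- Individual rationality: no student prefers the outside option to her assignment. -/
def IndRat {N S : Type*} (P : Profile N S) (μ : N → Option S) : Prop :=
  ∀ i, ¬ P i none (μ i)

/-- Non-wastefulness: no student prefers a school with an unfilled seat. -/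
def NonWasteful {N S : Type*} (C : SchoolContext N S) (P : Profile N S)
    (μ : N → Option S) : Prop :=
  ∀ i (s : S), P i (some s) (μ i) → C.cap s ≤ {j | μ j = some s}.ncard

/-- No justified envy. -/
def NoJustifiedEnvy {N S : Type*} (C : SchoolContext N S) (P : Profile N S)
    (μ : N → Option S) : Prop :=
  ∀ i j (s : S), P i (some s) (μ i) → μ j = some s → ¬ C.prio s i j

/-- Stability of a matching. -/
def IsStable {N S : Type*} (C : SchoolContext N S) (P : Profile N S)
    (μ : N → Option S) : Prop :=
  Feasible C μ ∧ IndRat P μ ∧ NonWasteful C P μ ∧ NoJustifiedEnvy C P μ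

/-- Strategy-proofness of a mechanism. -/
def StrategyProof {N S : Type*} [DecidableEq N] (Φ : Profile N S → (N → Option S)) : Prop :=
  ∀ (P : Profile N S), ProfWF P → ∀ (i : N) (P'i : Option S → Option S → Prop),
    ProfWF (Function.update P i P'i) →
    ¬ P i (Φ (Function.update P i P'i) i) (Φ P i)

/-- Local non-bossiness: a unilateral deviation that keeps the deviator's
assignment keeps the whole set of students assigned there. -/
def LocallyNonBossy {N S : Type*} [DecidableEq N] (Φ : Profile N S → (N → Option S)) : Prop :=
  ∀ (P : Profile N S), ProfWF P → ∀ (i : N) (P'i : Option S → Option S → Prop),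
    ProfWF (Function.update P i P'i) → ∀ s : Option S,
    Φ P i = s → Φ (Function.update P i P'i) i = s →
    {j | Φ P j = s} = {j | Φ (Function.update P i P'i) j = s}

/-- Replace the preferences of the members of coalition `Cs` by `P'`. -/
def updateGroup {N S : Type*} (P : Profile N S) (Cs : Set N) (P' : Profile N S) :
    Profile N S :=
  fun i a b => (i ∈ Cs ∧ P' i a b) ∨ (i ∉ Cs ∧ P i a b)

/-- Local group strategy-proofness: no coalition of schoolmates can jointly misreport so
that all are weakly better off and one strictly better off. -/
def LocallyGSP {N S : Type*} (Φ : Profile N S → (N → Option S)) : Prop :=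
  ¬ ∃ (s : Option S) (P : Profile N S) (Cs : Set N) (P' : Profile N S),
      ProfWF P ∧ ProfWF (updateGroup P Cs P') ∧
      (∀ i ∈ Cs, Φ P i = s) ∧
      (∀ j ∈ Cs, ¬ P j (Φ P j) (Φ (updateGroup P Cs P') j)) ∧
      (∃ i ∈ Cs, P i (Φ (updateGroup P Cs P') i) (Φ P i))

/-- Local group non-bossiness: if a coalition of schoolmates jointly misreports with each
member keeping her assignment, the set of students at their common school is unchanged. -/
def LocallyGroupNonBossy {N S : Type*} (Φ : Profile N S → (N → Option S)) : Prop :=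
  ∀ (s : Option S) (P : Profile N S) (Cs : Set N) (P' : Profile N S),
    ProfWF P → ProfWF (updateGroup P Cs P') →
    (∀ i ∈ Cs, Φ P i = s) →
    (∀ i ∈ Cs, Φ (updateGroup P Cs P') i = Φ P i) →
    {j | Φ P j = s} = {j | Φ (updateGroup P Cs P') j = s}

/-- Weak non-bossiness (Bando–Imamura): a unilateral deviation keeping the deviator's
assignment keeps the set of unassigned students. -/
def WeakNonBossy {N S : Type*} [DecidableEq N] (Φ : Profile N S → (N → Option S)) : Prop :=
  ∀ (P : Profile N S), ProfWF P → ∀ (i : N) (P'i : Option S → Option S → Prop),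
    ProfWF (Function.update P i P'i) →
    Φ (Function.update P i P'i) i = Φ P i →
    {j | Φ P j = none} = {j | Φ (Function.update P i P'i) j = none}


/-! ### Auxiliary machinery -/

section Aux

abbrev OptS := Option (Fin 2)
abbrev T3 := Bool × Bool × Bool

def encO : OptS → Fin 3
  | none => 2
  | some s => s.castSucc

def fB (t : T3) (i j : Fin 3) : Bool :=
  if i = 0 then (if j = 1 then t.1 else if j = 2 then t.2.1 else false)
  else if i = 1 then (if j = 0 then !t.1 else if j = 2 then t.2.2 else false)
  else (if j = 0 then !t.2.1 else if j = 1 then !t.2.2 else false)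

def ConsistentT (t : T3) : Prop :=
  ¬(t.1 = true ∧ t.2.2 = true ∧ t.2.1 = false) ∧
  ¬(t.1 = false ∧ t.2.1 = true ∧ t.2.2 = false)

instance (t : T3) : Decidable (ConsistentT t) := by
  unfold ConsistentT; infer_instance

def Encodes (R : OptS → OptS → Prop) (t : T3) : Prop :=
  ∀ a b, R a b ↔ fB t (encO a) (encO b) = true

instance (R : OptS → OptS → Prop) [∀ a b, Decidable (R a b)] (t : T3) :
    Decidable (Encodes R t) := by
  unfold Encodes; infer_instance

open Classical in
noncomputable def codeOf (R : OptS → OptS → Prop) : T3 :=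
  (decide (R (some 0) (some 1)), decide (R (some 0) none), decide (R (some 1) none))

lemma flipIff {R : OptS → OptS → Prop} (h : IsStrictTotalOrder OptS R)
    {a b : OptS} (hne : a ≠ b) : R b a ↔ ¬ R a b := by
  constructor
  · intro h1 h2
    exact h.irrefl a (h.trans _ _ _ h2 h1)
  · intro h1
    by_contra h2
    exact hne (h.trichotomous a b h1 h2)

lemma encodes_codeOf (R : OptS → OptS → Prop) (h : IsStrictTotalOrder OptS R) :
    Encodes R (codeOf R) := by
  classical
  intro a b
  have hAB : R (some 1) (some 0) ↔ ¬ R (some 0) (some 1) := flipIff h (by decide)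
  have hAO : R none (some 0) ↔ ¬ R (some 0) none := flipIff h (by decide)
  have hBO : R none (some 1) ↔ ¬ R (some 1) none := flipIff h (by decide)
  rcases a with _ | a <;> rcases b with _ | b
  · simp [encO, fB, codeOf, h.irrefl none]
  · fin_cases b <;>
      simp +decide [encO, fB, codeOf, hAO, hBO, decide_eq_true_eq]
  · fin_cases a <;>
      simp +decide [encO, fB, codeOf, decide_eq_true_eq]
  · fin_cases a <;> fin_cases b <;>
      simp +decide [encO, fB, codeOf, hAB, decide_eq_true_eq, h.irrefl]

lemma consistent_codeOf (R : OptS → OptS → Prop) (h : IsStrictTotalOrder OptS R) :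
    ConsistentT (codeOf R) := by
  classical
  have hAB : R (some 1) (some 0) ↔ ¬ R (some 0) (some 1) := flipIff h (by decide)
  constructor
  · rintro ⟨h1, h2, h3⟩
    simp only [codeOf] at h1 h2 h3
    rw [decide_eq_true_eq] at h1 h2
    rw [decide_eq_false_iff_not] at h3
    exact h3 (h.trans _ _ _ h1 h2)
  · rintro ⟨h1, h2, h3⟩
    simp only [codeOf] at h1 h2 h3
    rw [decide_eq_false_iff_not] at h1 h3
    rw [decide_eq_true_eq] at h2
    exact h3 (h.trans _ _ _ ((hAB).2 h1) h2)

def capv : Fin 2 → ℕ := fun s => if s = 0 then 2 else 1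
def prioB (s : Fin 2) (i j : Fin 3) : Prop := if s = 0 then i < j else j < i

instance (s : Fin 2) (i j : Fin 3) : Decidable (prioB s i j) := by
  unfold prioB; infer_instance

def cnt (μ : Fin 3 → OptS) (s : Fin 2) : ℕ :=
  (Finset.univ.filter fun j => μ j = some s).card

def EncStable (t : Fin 3 → T3) (μ : Fin 3 → OptS) : Prop :=
  (∀ s : Fin 2, cnt μ s ≤ capv s) ∧
  (∀ i, ¬ fB (t i) (encO none) (encO (μ i)) = true) ∧
  (∀ i (s : Fin 2), fB (t i) (encO (some s)) (encO (μ i)) = true → capv s ≤ cnt μ s) ∧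
  (∀ i j (s : Fin 2), fB (t i) (encO (some s)) (encO (μ i)) = true →
      μ j = some s → ¬ prioB s i j)

instance (t : Fin 3 → T3) (μ : Fin 3 → OptS) : Decidable (EncStable t μ) := by
  unfold EncStable; infer_instance

def opts : List OptS := [none, some 0, some 1]

def candidates : List (Fin 3 → OptS) :=
  opts.flatMap fun a => opts.flatMap fun b => opts.map fun c => ![a, b, c]

def pick (t : Fin 3 → T3) : Fin 3 → OptS :=
  (candidates.find? fun μ => decide (EncStable t μ)).getD (fun _ => none)

set_option maxRecDepth 10000 in
lemma keyPick : ∀ t : Fin 3 → T3, (∀ i, ConsistentT (t i)) → EncStable t (pick t) := by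
  decide

lemma ncard_eq_cnt (μ : Fin 3 → OptS) (s : Fin 2) :
    {j | μ j = some s}.ncard = cnt μ s := by
  rw [show {j | μ j = some s} = ↑(Finset.univ.filter fun j => μ j = some s) by
      ext j; simp]
  rw [Set.ncard_coe_finset]
  rfl

lemma transfer (C : SchoolContext (Fin 3) (Fin 2))
    (hcap0 : C.cap 0 = 2) (hcap1 : C.cap 1 = 1)
    (hp0 : ∀ i j, C.prio 0 i j ↔ i < j)
    (hp1 : ∀ i j, C.prio 1 i j ↔ j < i)
    (P : Profile (Fin 3) (Fin 2)) (t : Fin 3 → T3)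
    (he : ∀ i, Encodes (P i) (t i)) (μ : Fin 3 → OptS)
    (hs : EncStable t μ) : IsStable C P μ := by
  have hcap : ∀ s : Fin 2, C.cap s = capv s := by
    intro s; fin_cases s
    · simpa [capv] using hcap0
    · simpa [capv] using hcap1
  have hpr : ∀ (s : Fin 2) (i j : Fin 3), C.prio s i j ↔ prioB s i j := by
    intro s i j; fin_cases s
    · simpa [prioB] using hp0 i j
    · simpa [prioB] using hp1 i j
  obtain ⟨h1, h2, h3, h4⟩ := hs
  refine ⟨?_, ?_, ?_, ?_⟩
  · intro s; rw [ncard_eq_cnt, hcap]; exact h1 s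
  · intro i; rw [he i]; exact h2 i
  · intro i s hpi
    rw [ncard_eq_cnt, hcap]
    exact h3 i s ((he i _ _).1 hpi)
  · intro i j s hpi hj hpr'
    exact h4 i j s ((he i _ _).1 hpi) hj ((hpr s i j).1 hpr')

/-! ### The concrete profiles -/

abbrev mkPref (r : OptS → ℕ) : OptS → OptS → Prop := fun a b => r a < r b

def rA : OptS → ℕ := fun o => o.elim 2 (fun s => if s = 0 then 0 else 1)
def rB : OptS → ℕ := fun o => o.elim 2 (fun s => if s = 0 then 1 else 0)
def rC : OptS → ℕ := fun o => o.elim 1 (fun s => if s = 0 then 2 else 0)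

abbrev prefA := mkPref rA
abbrev prefB := mkPref rB
abbrev prefC := mkPref rC

lemma mkPref_sto (r : OptS → ℕ) (hr : Function.Injective r) :
    IsStrictTotalOrder OptS (mkPref r) := by
  refine { trichotomous := ?_, irrefl := ?_, trans := ?_ }
  · intro a b h1 h2
    exact hr (le_antisymm (not_lt.1 h2) (not_lt.1 h1))
  · intro a; exact lt_irrefl _
  · intro a b c h1 h2; exact lt_trans h1 h2

def Pbar : Profile (Fin 3) (Fin 2) := ![prefA, prefB, prefA]
def mubar : Fin 3 → OptS := ![some 0, some 0, some 1]
def nubar : Fin 3 → OptS := ![some 0, some 1, some 0]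

lemma WF_Pbar : ProfWF Pbar := by
  intro i
  fin_cases i
  · exact mkPref_sto rA (by decide)
  · exact mkPref_sto rB (by decide)
  · exact mkPref_sto rA (by decide)

lemma WF_update (P : Profile (Fin 3) (Fin 2)) (hP : ProfWF P) (i : Fin 3)
    (R : OptS → OptS → Prop) (hR : IsStrictTotalOrder OptS R) :
    ProfWF (Function.update P i R) := by
  intro j
  rcases eq_or_ne j i with rfl | h
  · rw [Function.update_self]; exact hR
  · rw [Function.update_of_ne h]; exact hP j

lemma encA : Encodes prefA (true, true, true) := by decide
lemma encB : Encodes prefB (false, true, true) := by decide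
lemma encC : Encodes prefC (false, false, true) := by decide

lemma stable_Pbar (C : SchoolContext (Fin 3) (Fin 2))
    (hcap0 : C.cap 0 = 2) (hcap1 : C.cap 1 = 1)
    (hp0 : ∀ i j, C.prio 0 i j ↔ i < j)
    (hp1 : ∀ i j, C.prio 1 i j ↔ j < i) :
    IsStable C Pbar mubar := by
  refine transfer C hcap0 hcap1 hp0 hp1 Pbar
    ![(true, true, true), (false, true, true), (true, true, true)] ?_ mubar (by decide)
  intro i
  fin_cases i
  · exact encA
  · exact encB
  · exact encA

lemma stable_Pdev (C : SchoolContext (Fin 3) (Fin 2))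
    (hcap0 : C.cap 0 = 2) (hcap1 : C.cap 1 = 1)
    (hp0 : ∀ i j, C.prio 0 i j ↔ i < j)
    (hp1 : ∀ i j, C.prio 1 i j ↔ j < i) :
    IsStable C (Function.update Pbar 0 prefB) nubar := by
  refine transfer C hcap0 hcap1 hp0 hp1 _
    ![(false, true, true), (false, true, true), (true, true, true)] ?_ nubar (by decide)
  intro i
  fin_cases i
  · rw [show ((⟨0, by omega⟩ : Fin 3)) = 0 from rfl, Function.update_self]; exact encB
  · rw [Function.update_of_ne (by decide)]; exact encB
  · rw [Function.update_of_ne (by decide)]; exact encA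

lemma ne1 : Function.update Pbar 0 prefB ≠ Pbar := by
  intro h
  have h0 := congrFun h 0
  rw [Function.update_self] at h0
  have h2 : prefA (some 0) (some 1) := by decide
  have h3 : prefB (some 0) (some 1) := by
    rw [h0]; exact h2
  exact absurd h3 (by decide)

lemma ne2 : Function.update Pbar 1 prefC ≠ Pbar := by
  intro h
  have h0 := congrFun h 1
  rw [Function.update_self] at h0
  have h2 : prefB (some 0) none := by decide
  have h3 : prefC (some 0) none := by
    rw [h0]; exact h2
  exact absurd h3 (by decide)

lemma ne3 : Function.update Pbar 1 prefC ≠ Function.update Pbar 0 prefB := by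
  intro h
  have h0 := congrFun h 0
  rw [Function.update_of_ne (by decide), Function.update_self] at h0
  have h2 : prefB (some 0) (some 1) := by
    rw [← h0]
    show prefA (some 0) (some 1)
    decide
  exact absurd h2 (by decide)

open Classical in
noncomputable def Omega : Profile (Fin 3) (Fin 2) → (Fin 3 → OptS) :=
  fun P =>
    if P = Pbar then mubar
    else if P = Function.update Pbar 0 prefB then nubar
    else if h : ProfWF P then pick (fun i => codeOf (P i))
    else fun _ => none

lemma Omega_Pbar : Omega Pbar = mubar := by
  unfold Omega; rw [if_pos rfl]

lemma Omega_Pdev : Omega (Function.update Pbar 0 prefB) = nubar := by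
  unfold Omega; rw [if_neg ne1, if_pos rfl]

lemma Omega_stable (C : SchoolContext (Fin 3) (Fin 2))
    (hcap0 : C.cap 0 = 2) (hcap1 : C.cap 1 = 1)
    (hp0 : ∀ i j, C.prio 0 i j ↔ i < j)
    (hp1 : ∀ i j, C.prio 1 i j ↔ j < i) :
    ∀ P, ProfWF P → IsStable C P (Omega P) := by
  intro P hWF
  by_cases h1 : P = Pbar
  · subst h1
    rw [Omega_Pbar]
    exact stable_Pbar C hcap0 hcap1 hp0 hp1
  by_cases h2 : P = Function.update Pbar 0 prefB
  · subst h2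
    rw [Omega_Pdev]
    exact stable_Pdev C hcap0 hcap1 hp0 hp1
  · have : Omega P = pick (fun i => codeOf (P i)) := by
      unfold Omega
      rw [if_neg h1, if_neg h2, dif_pos hWF]
    rw [this]
    exact transfer C hcap0 hcap1 hp0 hp1 P _
      (fun i => encodes_codeOf _ (hWF i)) _
      (keyPick _ (fun i => consistent_codeOf _ (hWF i)))

end Aux

/-- Local non-bossiness and stability are independent: in the three-student, two-school
context with capacities (2,1) and priorities `s₁ : 1,2,3` and `s₂ : 3,2,1`, there is a
stable mechanism that is neither locally non-bossy nor strategy-proof. -/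
theorem stmt13 (C : SchoolContext (Fin 3) (Fin 2))
    (hcap0 : C.cap 0 = 2) (hcap1 : C.cap 1 = 1)
    (hp0 : ∀ i j, C.prio 0 i j ↔ i < j)
    (hp1 : ∀ i j, C.prio 1 i j ↔ j < i) :
    ∃ Ω : Profile (Fin 3) (Fin 2) → (Fin 3 → Option (Fin 2)),
      (∀ P, ProfWF P → IsStable C P (Ω P)) ∧
        ¬ LocallyNonBossy Ω ∧ ¬ StrategyProof Ω := by
  classical
  refine ⟨Omega, Omega_stable C hcap0 hcap1 hp0 hp1, ?_, ?_⟩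
  · -- not locally non-bossy
    intro hLNB
    have hWFdev : ProfWF (Function.update Pbar 0 prefB) :=
      WF_update Pbar WF_Pbar 0 prefB (mkPref_sto rB (by decide))
    have hEq := hLNB Pbar WF_Pbar 0 prefB hWFdev (some 0)
      (by rw [Omega_Pbar]; rfl) (by rw [Omega_Pdev]; rfl)
    have h1 : (1 : Fin 3) ∈ {j | Omega Pbar j = some 0} := by
      rw [Set.mem_setOf_eq, Omega_Pbar]; rfl
    rw [hEq, Set.mem_setOf_eq, Omega_Pdev] at h1
    exact absurd h1 (by decide)
  · -- not strategy-proof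
    intro hSP
    have hstoC : IsStrictTotalOrder OptS prefC := mkPref_sto rC (by decide)
    have hWFQ : ProfWF (Function.update Pbar 1 prefC) :=
      WF_update Pbar WF_Pbar 1 prefC hstoC
    set Q := Function.update Pbar 1 prefC with hQdef
    have hOQ : Omega Q = pick (fun i => codeOf (Q i)) := by
      unfold Omega
      rw [if_neg ne2, if_neg ne3, dif_pos hWFQ]
    have hstab : IsStable C Q (Omega Q) := Omega_stable C hcap0 hcap1 hp0 hp1 Q hWFQ
    obtain ⟨hF, hIR, hNW, hNE⟩ := hstab
    have hQ1 : Q 1 = prefC := Function.update_self 1 prefC Pbar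
    have hQ0 : Q 0 = prefA := by
      rw [hQdef, Function.update_of_ne (by decide)]; rfl
    have hQ2 : Q 2 = prefA := by
      rw [hQdef, Function.update_of_ne (by decide)]; rfl
    have e3 : ∀ x : Fin 3, x = 0 ∨ x = 1 ∨ x = 2 := by decide
    have e2 : ∀ x : Fin 2, x = 0 ∨ x = 1 := by decide
    -- stability forces student 1 to get school 1 at Q
    have hμ1 : Omega Q 1 = some 1 := by
      set μ := Omega Q with hμdef
      rcases hm : μ 1 with _ | s
      · -- unassigned: wasteful
        exfalso
        have hw : C.cap 1 ≤ {j | μ j = some 1}.ncard := by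
          apply hNW 1 1
          rw [hQ1, hm]
          decide
        rw [hcap1] at hw
        have hne : {j | μ j = some 1}.Nonempty := by
          apply Set.nonempty_of_ncard_ne_zero; omega
        obtain ⟨j, hj⟩ := hne
        rw [Set.mem_setOf_eq] at hj
        rcases e3 j with rfl | rfl | rfl
        · -- student 0 at school 1, wants school 0 which has ≤ 1 student
          have hw0 : C.cap 0 ≤ {l | μ l = some 0}.ncard := by
            apply hNW 0 0
            rw [hQ0, hj]
            decide
          have hsub : {l | μ l = some 0} ⊆ {2} := by
            intro x hx
            rw [Set.mem_setOf_eq] at hx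
            rcases e3 x with rfl | rfl | rfl
            · rw [hj] at hx; exact absurd hx (by decide)
            · rw [hm] at hx; exact absurd hx (by decide)
            · rfl
          have hc : {l | μ l = some 0}.ncard ≤ 1 := by
            have := Set.ncard_le_ncard hsub (Set.finite_singleton _)
            simpa using this
          rw [hcap0] at hw0; omega
        · rw [hm] at hj; exact absurd hj (by decide)
        · have hw0 : C.cap 0 ≤ {l | μ l = some 0}.ncard := by
            apply hNW 2 0
            rw [hQ2, hj]
            decide
          have hsub : {l | μ l = some 0} ⊆ {0} := by
            intro x hx
            rw [Set.mem_setOf_eq] at hx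
            rcases e3 x with rfl | rfl | rfl
            · rfl
            · rw [hm] at hx; exact absurd hx (by decide)
            · rw [hj] at hx; exact absurd hx (by decide)
          have hc : {l | μ l = some 0}.ncard ≤ 1 := by
            have := Set.ncard_le_ncard hsub (Set.finite_singleton _)
            simpa using this
          rw [hcap0] at hw0; omega
      · rcases e2 s with rfl | rfl
        · -- school 0 unacceptable under prefC
          exfalso
          apply hIR 1
          rw [hQ1, hm]
          decide
        · rfl
    have := hSP Pbar WF_Pbar 1 prefC hWFQ
    apply this
    rw [hμ1, Omega_Pbar]
    show Pbar 1 (some 1) (some 0)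
    show prefB (some 1) (some 0)
    decide
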